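/- Let D > 0, c ∈ ℝ, r₁, r₂ > 0, ĥ₁, ĥ₂, ĝ₂ > 0, n > 0 and L₀ > 0. Suppose U₁, U₂ : [0, L₀] → ℝ are twice continuously differentiable, with Uᵢ(0) = Uᵢ(L₀) = 0, Uᵢ(ξ) > 0 for ξ ∈ (0, L₀), D U₁''(ξ) + c U₁'(ξ) + U₁(ξ)(r₁ − (ĥ₁ U₁(ξ))ⁿ) = 0 and D U₂''(ξ) + c U₂'(ξ) + U₂(ξ)(r₂ − (ĥ₂ U₂(ξ))ⁿ) = 0 for all ξ ∈ (0, L₀). If r₂ ≥ r₁ and (r₂/r₁)^{1/n} ĥ₁ ≥ ĝ₂, then ĝ₂ U₁(ξ) ≤ ĥ₂ U₂(ξ) for all ξ ∈ [0, L₀]. -/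

import Mathlib

open Set Real Filter


/-- Second derivative test at an interior local minimum. -/
lemma aux_sdt_min (f f' f'' : ℝ → ℝ) (x₀ : ℝ) (s : Set ℝ) (hs : s ∈ nhds x₀)
    (h1 : ∀ x ∈ s, HasDerivAt f (f' x) x) (h2 : HasDerivAt f' (f'' x₀) x₀)
    (hmin : IsLocalMin f x₀) : f' x₀ = 0 ∧ 0 ≤ f'' x₀ := by
  have hx₀s : x₀ ∈ s := mem_of_mem_nhds hs
  have hf'0 : f' x₀ = 0 := hmin.hasDerivAt_eq_zero (h1 x₀ hx₀s)
  refine ⟨hf'0, ?_⟩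
  by_contra hcon
  push_neg at hcon
  have hslope : Tendsto (slope f' x₀) (nhdsWithin x₀ {x₀}ᶜ) (nhds (f'' x₀)) :=
    hasDerivAt_iff_tendsto_slope.mp h2
  have hneg : ∀ᶠ y in nhdsWithin x₀ (Ioi x₀), slope f' x₀ y < 0 := by
    have : ∀ᶠ y in nhdsWithin x₀ {x₀}ᶜ, slope f' x₀ y < 0 :=
      hslope.eventually_lt_const hcon
    exact this.filter_mono (nhdsWithin_mono _ (fun y hy => ne_of_gt hy))
  have hsIoi : ∀ᶠ y in nhdsWithin x₀ (Ioi x₀), y ∈ s :=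
    eventually_nhdsWithin_of_eventually_nhds (by exact hs)
  obtain ⟨b, hb, hsub⟩ := mem_nhdsGT_iff_exists_Ioo_subset.mp (hneg.and hsIoi)
  have hbx : x₀ < b := hb
  set b' := (x₀ + b) / 2 with hb'
  have hxb' : x₀ < b' := by simp only [hb']; linarith
  have hb'b : b' < b := by simp only [hb']; linarith
  have hII : ∀ y ∈ Icc x₀ b', y ∈ s := by
    intro y hy
    rcases eq_or_lt_of_le hy.1 with h | h
    · rw [← h]; exact hx₀s
    · exact (hsub ⟨h, lt_of_le_of_lt hy.2 hb'b⟩).2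
  have hanti : StrictAntiOn f (Icc x₀ b') := by
    apply strictAntiOn_of_deriv_neg (convex_Icc _ _)
    · exact fun y hy => ((h1 y (hII y hy)).continuousAt).continuousWithinAt
    · intro y hy
      rw [interior_Icc] at hy
      have hys : y ∈ s := hII y ⟨le_of_lt hy.1, le_of_lt hy.2⟩
      rw [(h1 y hys).deriv]
      have hyIoo : y ∈ Ioo x₀ b := ⟨hy.1, lt_trans hy.2 hb'b⟩
      have hsl := (hsub hyIoo).1
      rw [slope_def_field, hf'0, sub_zero] at hsl
      by_contra h
      push_neg at h
      have : 0 ≤ f' y / (y - x₀) := div_nonneg h (by linarith [hy.1])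
      linarith
  obtain ⟨ε, hε, hball⟩ := Metric.eventually_nhds_iff.mp hmin
  set y := min b' (x₀ + ε / 2) with hy
  have hxy : x₀ < y := lt_min hxb' (by linarith)
  have hyb' : y ≤ b' := min_le_left _ _
  have h5 : f y < f x₀ := hanti (left_mem_Icc.mpr (le_of_lt hxb')) ⟨le_of_lt hxy, hyb'⟩ hxy
  have h6 : f x₀ ≤ f y := by
    apply hball
    rw [Real.dist_eq, abs_lt]
    constructor
    · linarith [min_le_right b' (x₀ + ε / 2)]
    · have := min_le_right b' (x₀ + ε / 2); linarith
  linarith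

/-- Second derivative test at an interior local maximum. -/
lemma aux_sdt_max (f f' f'' : ℝ → ℝ) (x₀ : ℝ) (s : Set ℝ) (hs : s ∈ nhds x₀)
    (h1 : ∀ x ∈ s, HasDerivAt f (f' x) x) (h2 : HasDerivAt f' (f'' x₀) x₀)
    (hmax : IsLocalMax f x₀) : f' x₀ = 0 ∧ f'' x₀ ≤ 0 := by
  have := aux_sdt_min (fun x => -f x) (fun x => -f' x) (fun x => -f'' x) x₀ s hs
    (fun x hx => (h1 x hx).neg) h2.neg hmax.neg
  obtain ⟨h1', h2'⟩ := this
  simp only [neg_eq_zero] at h1'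
  exact ⟨h1', by linarith⟩

/-- Weak minimum principle for `D φ'' + c φ' - K φ` on an interval. -/
lemma aux_wmp (D c K a b : ℝ) (hD : 0 < D) (hK : 0 < K) (hab : a < b)
    (φ φ' φ'' : ℝ → ℝ)
    (h1 : ∀ x ∈ Ioo a b, HasDerivAt φ (φ' x) x)
    (h2 : ∀ x ∈ Ioo a b, HasDerivAt φ' (φ'' x) x)
    (hcont : ContinuousOn φ (Icc a b))
    (hineq : ∀ x ∈ Ioo a b, D * φ'' x + c * φ' x ≤ K * φ x)
    (ha : 0 ≤ φ a) (hb : 0 ≤ φ b) : ∀ x ∈ Icc a b, 0 ≤ φ x := by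
  obtain ⟨x₀, hx₀, hmin⟩ := isCompact_Icc.exists_isMinOn (nonempty_Icc.mpr (le_of_lt hab)) hcont
  intro x hx
  have key : 0 ≤ φ x₀ := by
    by_contra hneg
    push_neg at hneg
    have hx₀I : x₀ ∈ Ioo a b := by
      rcases hx₀.1.eq_or_lt with h | h
      · exact absurd (h ▸ hneg) (not_lt.mpr ha)
      rcases hx₀.2.eq_or_lt with h2 | h2
      · exact absurd (h2 ▸ hneg) (not_lt.mpr hb)
      exact ⟨h, h2⟩
    have hloc : IsLocalMin φ x₀ := hmin.isLocalMin (Icc_mem_nhds hx₀I.1 hx₀I.2)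
    obtain ⟨hd0, hd2⟩ := aux_sdt_min φ φ' φ'' x₀ (Ioo a b)
      (Ioo_mem_nhds hx₀I.1 hx₀I.2) h1 (h2 x₀ hx₀I) hloc
    have := hineq x₀ hx₀I
    rw [hd0] at this
    nlinarith
  exact le_trans key (hmin hx)

/-- Hopf-type barrier lemma: linear lower bound near the left endpoint. -/
lemma aux_hopf (D c K a b : ℝ) (hD : 0 < D) (hK : 1 ≤ K) (hab : a < b)
    (ψ ψ' ψ'' : ℝ → ℝ)
    (h1 : ∀ x ∈ Ioo a b, HasDerivAt ψ (ψ' x) x)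
    (h2 : ∀ x ∈ Ioo a b, HasDerivAt ψ' (ψ'' x) x)
    (hcont : ContinuousOn ψ (Icc a b))
    (hineq : ∀ x ∈ Ioo a b, D * ψ'' x + c * ψ' x ≤ K * ψ x)
    (hψa : ψ a = 0) (hψb : 0 < ψ b) :
    ∃ γ > 0, ∀ x ∈ Icc a b, γ * (x - a) ≤ ψ x := by
  set α : ℝ := max 1 ((|c| + K) / D) with hα
  have hα1 : 1 ≤ α := le_max_left _ _
  have hα0 : 0 < α := lt_of_lt_of_le one_pos hα1
  have hαD : |c| + K ≤ D * α := by
    rw [mul_comm]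
    calc |c| + K = (|c| + K) / D * D := by field_simp
    _ ≤ α * D := mul_le_mul_of_nonneg_right (le_max_right _ _) (le_of_lt hD)
  have hkey : 0 ≤ D * α * α + c * α - K := by
    nlinarith [abs_nonneg c, neg_abs_le c]
  have hexp : (1:ℝ) < Real.exp (α * (b - a)) := by
    rw [← Real.exp_zero]
    exact Real.exp_lt_exp.mpr (mul_pos hα0 (by linarith))
  set η : ℝ := ψ b / (Real.exp (α * (b - a)) - 1) with hη
  have hη0 : 0 < η := div_pos hψb (by linarith)
  refine ⟨η, hη0, ?_⟩
  set z : ℝ → ℝ := fun x => η * (Real.exp (α * (x - a)) - 1) with hz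
  set z' : ℝ → ℝ := fun x => η * (α * Real.exp (α * (x - a))) with hz'
  set z'' : ℝ → ℝ := fun x => η * (α * (α * Real.exp (α * (x - a)))) with hz''
  have hin : ∀ x : ℝ, HasDerivAt (fun x : ℝ => α * (x - a)) α x := by
    intro x
    simpa using ((hasDerivAt_id x).sub_const a).const_mul α
  have hzd : ∀ x : ℝ, HasDerivAt z (z' x) x := by
    intro x
    simpa [hz, hz', mul_comm] using (((hin x).exp).sub_const 1).const_mul η
  have hzd2 : ∀ x : ℝ, HasDerivAt z' (z'' x) x := by
    intro x
    have h3 : HasDerivAt (fun x => Real.exp (α * (x - a)))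
        (Real.exp (α * (x - a)) * α) x := (hin x).exp
    have := (h3.const_mul α).const_mul η
    simpa [hz', hz'', mul_comm, mul_assoc, mul_left_comm] using this
  have hzcont : Continuous z := by
    simp only [hz]; fun_prop
  have hzb : z b = ψ b := by
    simp only [hz, hη]
    field_simp
    exact div_self (by linarith)
  have hwmp := aux_wmp D c K a b hD (by linarith) hab
    (fun x => ψ x - z x) (fun x => ψ' x - z' x) (fun x => ψ'' x - z'' x)
    (fun x hx => (h1 x hx).sub (hzd x)) (fun x hx => (h2 x hx).sub (hzd2 x))
    (hcont.sub hzcont.continuousOn)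
    (by
      intro x hx
      have hi := hineq x hx
      set E : ℝ := Real.exp (α * (x - a)) with hE
      have hE0 : 0 < E := Real.exp_pos _
      have hzz : K * z x ≤ D * z'' x + c * z' x := by
        have heq : D * z'' x + c * z' x - K * z x
            = η * (E * (D * α * α + c * α - K) + K) := by
          simp only [hz, hz', hz'', hE]; ring
        nlinarith [mul_nonneg (le_of_lt hE0) hkey]
      linarith)
    (by simp [hψa, hz])
    (by simp only [hzb]; linarith)
  intro x hx
  have h6 := hwmp x hx
  have h7 : α * (x - a) ≤ Real.exp (α * (x - a)) - 1 := by
    linarith [Real.add_one_le_exp (α * (x - a))]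
  have h8 : x - a ≤ α * (x - a) := by nlinarith [hx.1]
  have h9 : η * (x - a) ≤ z x := by
    simp only [hz]
    nlinarith [hx.1]
  linarith

/-- Pointwise bound `a^p - b^p ≤ p M^(p-1) (a - b)` for `0 ≤ b ≤ a ≤ M`, `1 ≤ p`. -/
lemma aux_rpow_lip (M p a b : ℝ) (hp : 1 ≤ p) (hb : 0 ≤ b) (hba : b ≤ a) (haM : a ≤ M) :
    a ^ p - b ^ p ≤ p * M ^ (p - 1) * (a - b) := by
  set g : ℝ → ℝ := fun t => p * M ^ (p - 1) * t - t ^ p with hg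
  have hder : ∀ t : ℝ, HasDerivAt g (p * M ^ (p - 1) - p * t ^ (p - 1)) t := by
    intro t
    have h1 : HasDerivAt (fun t : ℝ => t ^ p) (p * t ^ (p - 1)) t :=
      Real.hasDerivAt_rpow_const (Or.inr hp)
    have h2 := ((hasDerivAt_id' t).const_mul (p * M ^ (p - 1))).sub h1
    rw [mul_one] at h2
    exact h2
  have hmono : MonotoneOn g (Icc 0 M) := by
    apply monotoneOn_of_deriv_nonneg (convex_Icc 0 M)
    · exact fun t ht => ((hder t).continuousAt).continuousWithinAt
    · exact fun t ht => ((hder t).differentiableAt).differentiableWithinAt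
    · intro t ht
      rw [interior_Icc] at ht
      rw [(hder t).deriv]
      have : t ^ (p - 1) ≤ M ^ (p - 1) :=
        Real.rpow_le_rpow (le_of_lt ht.1) (le_of_lt ht.2) (by linarith)
      nlinarith
  have hMa : 0 ≤ M := le_trans (le_trans hb hba) haM
  have := hmono (⟨hb, le_trans hba haM⟩ : b ∈ Icc 0 M) (⟨le_trans hb hba, haM⟩ : a ∈ Icc 0 M) hba
  simp only [hg] at this
  linarith

/-- A priori sup bound: `(h U)^n ≤ r` on `[0, L]`. -/
lemma aux_supbound (D c r h n L : ℝ) (hD : 0 < D) (hr : 0 < r) (hh : 0 < h)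
    (hn : 0 < n) (hL : 0 < L) (U : ℝ → ℝ)
    (hd1 : ∀ x ∈ Ioo 0 L, HasDerivAt U (deriv U x) x)
    (hd2 : ∀ x ∈ Ioo 0 L, HasDerivAt (deriv U) (deriv (deriv U) x) x)
    (hcont : ContinuousOn U (Icc 0 L))
    (hU0 : U 0 = 0) (hUL : U L = 0)
    (hpos : ∀ ξ ∈ Ioo 0 L, 0 < U ξ)
    (hode : ∀ ξ ∈ Ioo 0 L, D * deriv (deriv U) ξ + c * deriv U ξ
      + U ξ * (r - (h * U ξ) ^ n) = 0) :
    ∀ ξ ∈ Icc 0 L, (h * U ξ) ^ n ≤ r := by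
  have hne : (Icc (0:ℝ) L).Nonempty := nonempty_Icc.mpr (le_of_lt hL)
  obtain ⟨x₀, hx₀, hmax⟩ := isCompact_Icc.exists_isMaxOn hne hcont
  have hmid : L / 2 ∈ Ioo 0 L := ⟨by linarith, by linarith⟩
  have hUx₀ : 0 < U x₀ :=
    lt_of_lt_of_le (hpos _ hmid) (hmax ⟨le_of_lt hmid.1, le_of_lt hmid.2⟩)
  have hx₀I : x₀ ∈ Ioo 0 L := by
    rcases hx₀.1.eq_or_lt with h0 | h0
    · rw [← h0] at hUx₀; rw [hU0] at hUx₀; linarith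
    rcases hx₀.2.eq_or_lt with h2 | h2
    · rw [h2] at hUx₀; rw [hUL] at hUx₀; linarith
    exact ⟨h0, h2⟩
  have hloc : IsLocalMax U x₀ := hmax.isLocalMax (Icc_mem_nhds hx₀I.1 hx₀I.2)
  obtain ⟨hz1, hz2⟩ := aux_sdt_max U (deriv U) (deriv (deriv U)) x₀ (Ioo 0 L)
    (Ioo_mem_nhds hx₀I.1 hx₀I.2) hd1 (hd2 x₀ hx₀I) hloc
  have hOde := hode x₀ hx₀I
  rw [hz1] at hOde
  have hAmax : (h * U x₀) ^ n ≤ r := by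
    by_contra hA
    push_neg at hA
    nlinarith
  have hUnn : ∀ ξ ∈ Icc 0 L, 0 ≤ U ξ := by
    intro ξ hξ
    rcases hξ.1.eq_or_lt with h0 | h0
    · rw [← h0, hU0]
    rcases hξ.2.eq_or_lt with h2 | h2
    · rw [h2, hUL]
    · exact le_of_lt (hpos ξ ⟨h0, h2⟩)
  intro ξ hξ
  calc (h * U ξ) ^ n ≤ (h * U x₀) ^ n := by
        apply Real.rpow_le_rpow (mul_nonneg (le_of_lt hh) (hUnn ξ hξ))
          (mul_le_mul_of_nonneg_left (hmax hξ) (le_of_lt hh)) (le_of_lt hn)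
  _ ≤ r := hAmax

lemma aux_derivs (L : ℝ) (U : ℝ → ℝ) (hreg : ContDiffOn ℝ 2 U (Icc 0 L)) :
    (∀ x ∈ Ioo 0 L, HasDerivAt U (deriv U x) x) ∧
    (∀ x ∈ Ioo 0 L, HasDerivAt (deriv U) (deriv (deriv U) x) x) := by
  have h2 : ContDiffOn ℝ (1+1) U (Ioo 0 L) := by
    have := hreg.mono Ioo_subset_Icc_self
    norm_num at this ⊢
    exact this
  have h3 := (contDiffOn_succ_iff_deriv_of_isOpen isOpen_Ioo).mp h2
  constructor
  · intro x hx
    exact (h3.1.differentiableAt (isOpen_Ioo.mem_nhds hx)).hasDerivAt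
  · intro x hx
    exact ((h3.2.2.differentiableOn (by norm_num)).differentiableAt (isOpen_Ioo.mem_nhds hx)).hasDerivAt

lemma aux_arith1 (r₁ r₂ A : ℝ) (hr₁ : 0 < r₁) (hr : r₁ ≤ r₂) (hA : A ≤ r₁) :
    r₁ - A ≤ r₂ - r₂ / r₁ * A := by
  have h3 : r₂ / r₁ * A ≤ r₂ - r₁ + A := by
    rw [div_mul_eq_mul_div, div_le_iff₀ hr₁]
    nlinarith
  linarith

lemma aux_arith2 (r₁ r₂ A B : ℝ) (hr₁ : 0 < r₁) (hr : r₁ ≤ r₂) (hA0 : 0 < A)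
    (hA : A ≤ r₁) (hB0 : 0 ≤ B) (hB : B < 1) :
    0 < r₂ - r₁ + A - B * (r₂ / r₁ * A) := by
  have key : B * (r₂ / r₁ * A) * r₁ = B * (r₂ * A) := by field_simp
  have hBA : B * A ≤ A := by nlinarith
  nlinarith [mul_nonneg (sub_nonneg.mpr hr) (by linarith : (0:ℝ) ≤ r₁ - B * A),
    mul_pos (mul_pos hr₁ hA0) (by linarith : (0:ℝ) < 1 - B)]

set_option maxHeartbeats 1000000 in
/-- Corollary 1, case D₁ = D₂ = D, invasibility: `U₁`, `U₂` positive
Dirichlet stationary states of `D Uᵢ'' + c Uᵢ' + Uᵢ(rᵢ − (ĥᵢUᵢ)ⁿ) = 0` on `[0, L₀]`.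
If `r₂ ≥ r₁` and `(r₂/r₁)^{1/n} ĥ₁ ≥ ĝ₂`, then `ĝ₂ U₁ ≤ ĥ₂ U₂` on `[0, L₀]`. -/
theorem stmt13 (D c r₁ r₂ hhat₁ hhat₂ ghat₂ n L₀ : ℝ)
    (hD : 0 < D) (hr₁ : 0 < r₁) (hr₂ : 0 < r₂)
    (hh₁ : 0 < hhat₁) (hh₂ : 0 < hhat₂) (hg₂ : 0 < ghat₂) (hn : 0 < n) (hL₀ : 0 < L₀)
    (U₁ U₂ : ℝ → ℝ)
    (hreg₁ : ContDiffOn ℝ 2 U₁ (Icc 0 L₀)) (hreg₂ : ContDiffOn ℝ 2 U₂ (Icc 0 L₀))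
    (hbc₁ : U₁ 0 = 0 ∧ U₁ L₀ = 0) (hbc₂ : U₂ 0 = 0 ∧ U₂ L₀ = 0)
    (hpos₁ : ∀ ξ ∈ Ioo 0 L₀, 0 < U₁ ξ) (hpos₂ : ∀ ξ ∈ Ioo 0 L₀, 0 < U₂ ξ)
    (hode₁ : ∀ ξ ∈ Ioo 0 L₀,
      D * deriv (deriv U₁) ξ + c * deriv U₁ ξ + U₁ ξ * (r₁ - (hhat₁ * U₁ ξ) ^ n) = 0)
    (hode₂ : ∀ ξ ∈ Ioo 0 L₀,
      D * deriv (deriv U₂) ξ + c * deriv U₂ ξ + U₂ ξ * (r₂ - (hhat₂ * U₂ ξ) ^ n) = 0)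
    (hr : r₁ ≤ r₂)
    (hgh : ghat₂ ≤ (r₂ / r₁) ^ (1 / n) * hhat₁) :
    ∀ ξ ∈ Icc 0 L₀, ghat₂ * U₁ ξ ≤ hhat₂ * U₂ ξ := by
  obtain ⟨hbc10, hbc1L⟩ := hbc₁
  obtain ⟨hbc20, hbc2L⟩ := hbc₂
  obtain ⟨hd1, hd1'⟩ := aux_derivs L₀ U₁ hreg₁
  obtain ⟨hd2, hd2'⟩ := aux_derivs L₀ U₂ hreg₂
  have hcont₁ : ContinuousOn U₁ (Icc 0 L₀) := hreg₁.continuousOn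
  have hcont₂ : ContinuousOn U₂ (Icc 0 L₀) := hreg₂.continuousOn
  have hsup₁ := aux_supbound D c r₁ hhat₁ n L₀ hD hr₁ hh₁ hn hL₀ U₁
    hd1 hd1' hcont₁ hbc10 hbc1L hpos₁ hode₁
  have hsup₂ := aux_supbound D c r₂ hhat₂ n L₀ hD hr₂ hh₂ hn hL₀ U₂
    hd2 hd2' hcont₂ hbc20 hbc2L hpos₂ hode₂
  have hU₁nn : ∀ ξ ∈ Icc 0 L₀, 0 ≤ U₁ ξ := by
    intro ξ hξ
    rcases hξ.1.eq_or_lt with h0 | h0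
    · rw [← h0, hbc10]
    rcases hξ.2.eq_or_lt with h2 | h2
    · rw [h2, hbc1L]
    · exact le_of_lt (hpos₁ ξ ⟨h0, h2⟩)
  have hU₂nn : ∀ ξ ∈ Icc 0 L₀, 0 ≤ U₂ ξ := by
    intro ξ hξ
    rcases hξ.1.eq_or_lt with h0 | h0
    · rw [← h0, hbc20]
    rcases hξ.2.eq_or_lt with h2 | h2
    · rw [h2, hbc2L]
    · exact le_of_lt (hpos₂ ξ ⟨h0, h2⟩)
  set μ : ℝ := (r₂ / r₁) ^ (1 / n) * hhat₁ with hμdef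
  have hμ0 : 0 < μ := mul_pos (Real.rpow_pos_of_pos (div_pos hr₂ hr₁) _) hh₁
  set v : ℝ → ℝ := fun ξ => μ * U₁ ξ with hvdef
  set w : ℝ → ℝ := fun ξ => hhat₂ * U₂ ξ with hwdef
  have hvnn : ∀ ξ ∈ Icc 0 L₀, 0 ≤ v ξ := fun ξ hξ => mul_nonneg (le_of_lt hμ0) (hU₁nn ξ hξ)
  have hwnn : ∀ ξ ∈ Icc 0 L₀, 0 ≤ w ξ := fun ξ hξ => mul_nonneg (le_of_lt hh₂) (hU₂nn ξ hξ)
  set S : Set ℝ := {θ | θ ∈ Icc (0:ℝ) 1 ∧ ∀ ξ ∈ Icc 0 L₀, θ * v ξ ≤ w ξ} with hSdef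
  have h0S : (0:ℝ) ∈ S := ⟨⟨le_refl 0, zero_le_one⟩, fun ξ hξ => by
    rw [zero_mul]; exact hwnn ξ hξ⟩
  have hbdd : BddAbove S := ⟨1, fun x hx => hx.1.2⟩
  set θ : ℝ := sSup S with hθdef
  have hθ0 : 0 ≤ θ := le_csSup hbdd h0S
  have hθle1 : θ ≤ 1 := csSup_le ⟨0, h0S⟩ (fun x hx => hx.1.2)
  have hθle : ∀ ξ ∈ Icc 0 L₀, θ * v ξ ≤ w ξ := by
    intro ξ hξ
    rcases (hvnn ξ hξ).eq_or_lt with h | h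
    · rw [← h, mul_zero]; exact hwnn ξ hξ
    · have h4 : θ ≤ w ξ / v ξ :=
        csSup_le ⟨0, h0S⟩ (fun x hx => (le_div_iff₀ h).mpr (hx.2 ξ hξ))
      calc θ * v ξ ≤ (w ξ / v ξ) * v ξ := mul_le_mul_of_nonneg_right h4 (le_of_lt h)
      _ = w ξ := by field_simp
  have hθ1 : θ = 1 := by
    by_contra hne
    have hθlt : θ < 1 := lt_of_le_of_ne hθle1 hne
    set ψ : ℝ → ℝ := fun ξ => hhat₂ * U₂ ξ - θ * μ * U₁ ξ with hψdef
    set ψ' : ℝ → ℝ := fun ξ => hhat₂ * deriv U₂ ξ - θ * μ * deriv U₁ ξ with hψ'def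
    set ψ'' : ℝ → ℝ := fun ξ => hhat₂ * deriv (deriv U₂) ξ - θ * μ * deriv (deriv U₁) ξ
      with hψ''def
    have hψeq : ∀ ξ, ψ ξ = w ξ - θ * v ξ := fun ξ => by
      simp only [hψdef, hwdef, hvdef]; ring
    have hψnn : ∀ ξ ∈ Icc 0 L₀, 0 ≤ ψ ξ := by
      intro ξ hξ
      rw [hψeq ξ]
      linarith [hθle ξ hξ]
    have hψd : ∀ x ∈ Ioo 0 L₀, HasDerivAt ψ (ψ' x) x := fun x hx =>
      ((hd2 x hx).const_mul hhat₂).sub ((hd1 x hx).const_mul (θ * μ))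
    have hψd' : ∀ x ∈ Ioo 0 L₀, HasDerivAt ψ' (ψ'' x) x := fun x hx =>
      ((hd2' x hx).const_mul hhat₂).sub ((hd1' x hx).const_mul (θ * μ))
    have hψcont : ContinuousOn ψ (Icc 0 L₀) :=
      (continuousOn_const.mul hcont₂).sub (continuousOn_const.mul hcont₁)
    have hψ0 : ψ 0 = 0 := by simp [hψdef, hbc10, hbc20]
    have hψL : ψ L₀ = 0 := by simp [hψdef, hbc1L, hbc2L]
    have hnne : n ≠ 0 := ne_of_gt hn
    have hrpow_n : ((r₂ / r₁) ^ (1 / n)) ^ n = r₂ / r₁ := by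
      rw [← Real.rpow_mul (le_of_lt (div_pos hr₂ hr₁))]
      rw [one_div, inv_mul_cancel₀ hnne, Real.rpow_one]
    set K : ℝ := max 1 ((1 + n) * r₂) with hKdef
    have hK1 : 1 ≤ K := le_max_left _ _
    have hKr : (1 + n) * r₂ ≤ K := le_max_right _ _
    -- the differential inequality satisfied by ψ
    have hr2n : (r₂ ^ (1/n)) ^ n = r₂ := by
      rw [← Real.rpow_mul (le_of_lt hr₂)]
      rw [one_div, inv_mul_cancel₀ hnne, Real.rpow_one]
    have hψineq : ∀ x ∈ Ioo 0 L₀, D * ψ'' x + c * ψ' x ≤ K * ψ x := by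
      intro x hx
      have hxI : x ∈ Icc 0 L₀ := Ioo_subset_Icc_self hx
      have ha : 0 < U₁ x := hpos₁ x hx
      have hbx : 0 < U₂ x := hpos₂ x hx
      have e1 := hode₁ x hx
      have e2 := hode₂ x hx
      have hAr : (hhat₁ * U₁ x) ^ n ≤ r₁ := hsup₁ x hxI
      have hA0 : 0 < (hhat₁ * U₁ x) ^ n := Real.rpow_pos_of_pos (mul_pos hh₁ ha) n
      have hu : (μ * U₁ x) ^ n = (r₂ / r₁) * (hhat₁ * U₁ x) ^ n := by
        rw [show μ * U₁ x = (r₂ / r₁) ^ (1/n) * (hhat₁ * U₁ x) by rw [hμdef]; ring]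
        rw [Real.mul_rpow (Real.rpow_nonneg (le_of_lt (div_pos hr₂ hr₁)) _)
          (le_of_lt (mul_pos hh₁ ha)), hrpow_n]
      have hDc : D * ψ'' x + c * ψ' x
          = -(hhat₂ * U₂ x) * (r₂ - (hhat₂ * U₂ x) ^ n)
            + θ * μ * U₁ x * (r₁ - (hhat₁ * U₁ x) ^ n) := by
        simp only [hψ'def, hψ''def]
        linear_combination hhat₂ * e2 - θ * μ * e1
      have hstep1 : θ * μ * U₁ x * (r₁ - (hhat₁ * U₁ x) ^ n)
          ≤ θ * (μ * U₁ x) * (r₂ - (μ * U₁ x) ^ n) := by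
        have hkey : r₁ - (hhat₁ * U₁ x) ^ n ≤ r₂ - (μ * U₁ x) ^ n := by
          rw [hu]
          exact aux_arith1 r₁ r₂ _ hr₁ hr hAr
        have hT : 0 ≤ θ * (μ * U₁ x) := mul_nonneg hθ0 (le_of_lt (mul_pos hμ0 ha))
        calc θ * μ * U₁ x * (r₁ - (hhat₁ * U₁ x) ^ n)
            = θ * (μ * U₁ x) * (r₁ - (hhat₁ * U₁ x) ^ n) := by ring
        _ ≤ θ * (μ * U₁ x) * (r₂ - (μ * U₁ x) ^ n) :=
            mul_le_mul_of_nonneg_left hkey hT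
      have hav : v x = μ * U₁ x := rfl
      have hθvx : θ * (μ * U₁ x) ≤ hhat₂ * U₂ x := hθle x hxI
      have hwM : hhat₂ * U₂ x ≤ r₂ ^ (1/n) := by
        by_contra hcon
        push_neg at hcon
        have := Real.rpow_lt_rpow (Real.rpow_nonneg (le_of_lt hr₂) _) hcon hn
        rw [hr2n] at this
        linarith [hsup₂ x hxI]
      have hb1 : (hhat₂ * U₂ x) * (hhat₂ * U₂ x) ^ n = (hhat₂ * U₂ x) ^ (1 + n) := by
        rw [Real.rpow_add (mul_pos hh₂ hbx), Real.rpow_one]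
      have ha1 : (μ * U₁ x) * (μ * U₁ x) ^ n = (μ * U₁ x) ^ (1 + n) := by
        rw [Real.rpow_add (mul_pos hμ0 ha), Real.rpow_one]
      have hθp : (θ * (μ * U₁ x)) ^ (1 + n) ≤ θ * (μ * U₁ x) ^ (1 + n) := by
        rcases hθ0.eq_or_lt with h0 | h0
        · rw [← h0, zero_mul, Real.zero_rpow (by linarith), zero_mul]
        · rw [Real.mul_rpow (le_of_lt h0) (le_of_lt (mul_pos hμ0 ha))]
          have h7 : θ ^ (1 + n) ≤ θ := by
            calc θ ^ (1 + n) ≤ θ ^ (1:ℝ) :=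
              Real.rpow_le_rpow_of_exponent_ge h0 hθle1 (by linarith)
            _ = θ := Real.rpow_one θ
          exact mul_le_mul_of_nonneg_right h7
            (Real.rpow_nonneg (le_of_lt (mul_pos hμ0 ha)) _)
      have hlip := aux_rpow_lip (r₂ ^ (1/n)) (1 + n) (hhat₂ * U₂ x) (θ * (μ * U₁ x))
        (by linarith) (mul_nonneg hθ0 (le_of_lt (mul_pos hμ0 ha))) hθvx hwM
      rw [show (1:ℝ) + n - 1 = n by ring, hr2n] at hlip
      have hψx : ψ x = hhat₂ * U₂ x - θ * (μ * U₁ x) := by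
        simp only [hψdef]; ring
      have hψxnn : 0 ≤ ψ x := hψnn x hxI
      have hstep2 : θ * (μ * U₁ x) * (r₂ - (μ * U₁ x) ^ n)
          - (hhat₂ * U₂ x) * (r₂ - (hhat₂ * U₂ x) ^ n) ≤ K * ψ x := by
        have hr₂ψ : 0 ≤ r₂ * ψ x := mul_nonneg (le_of_lt hr₂) hψxnn
        have hKψ : (1 + n) * r₂ * ψ x ≤ K * ψ x :=
          mul_le_mul_of_nonneg_right hKr hψxnn
        have ha1' : θ * ((μ * U₁ x) * (μ * U₁ x) ^ n) = θ * (μ * U₁ x) ^ (1 + n) := by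
          rw [ha1]
        have hψx2 : r₂ * ψ x = r₂ * (hhat₂ * U₂ x - θ * (μ * U₁ x)) := by rw [hψx]
        have hψx3 : (1 + n) * r₂ * ψ x
            = (1 + n) * r₂ * (hhat₂ * U₂ x - θ * (μ * U₁ x)) := by rw [hψx]
        linarith [hlip, hθp, hb1, ha1', hψx2, hψx3]
      linarith [hDc, hstep1, hstep2]
    by_cases hA : ∃ x₀ ∈ Ioo 0 L₀, ψ x₀ ≤ 0
    · -- interior touching point: contradiction
      obtain ⟨x₀, hx₀, hψx₀le⟩ := hA
      have hx₀I : x₀ ∈ Icc 0 L₀ := Ioo_subset_Icc_self hx₀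
      have hψx₀ : ψ x₀ = 0 := le_antisymm hψx₀le (hψnn x₀ hx₀I)
      have ha : 0 < U₁ x₀ := hpos₁ x₀ hx₀
      have hbx : 0 < U₂ x₀ := hpos₂ x₀ hx₀
      have hew : hhat₂ * U₂ x₀ = θ * μ * U₁ x₀ := by
        have h9 := hψx₀
        simp only [hψdef] at h9
        linarith
      have hθpos : 0 < θ := by
        rcases hθ0.eq_or_lt with h0 | h0
        · exfalso
          rw [← h0, zero_mul, zero_mul] at hew
          nlinarith [mul_pos hh₂ hbx]
        · exact h0
      have hloc : IsLocalMin ψ x₀ := by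
        have hev : ∀ᶠ y in nhds x₀, ψ x₀ ≤ ψ y := by
          filter_upwards [Icc_mem_nhds hx₀.1 hx₀.2] with y hy
          rw [hψx₀]
          exact hψnn y hy
        exact hev
      obtain ⟨hz1, hz2⟩ := aux_sdt_min ψ ψ' ψ'' x₀ (Ioo 0 L₀)
        (Ioo_mem_nhds hx₀.1 hx₀.2) hψd (hψd' x₀ hx₀) hloc
      have eψ' : hhat₂ * deriv U₂ x₀ = θ * μ * deriv U₁ x₀ := by
        simp only [hψ'def] at hz1
        linarith
      have eψ'' : θ * μ * deriv (deriv U₁) x₀ ≤ hhat₂ * deriv (deriv U₂) x₀ := by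
        simp only [hψ''def] at hz2
        linarith
      have e1 := hode₁ x₀ hx₀
      have e2 := hode₂ x₀ hx₀
      have hAr : (hhat₁ * U₁ x₀) ^ n ≤ r₁ := hsup₁ x₀ hx₀I
      have hA0 : 0 < (hhat₁ * U₁ x₀) ^ n := Real.rpow_pos_of_pos (mul_pos hh₁ ha) n
      have epow : (hhat₂ * U₂ x₀) ^ n = θ ^ n * (r₂ / r₁ * (hhat₁ * U₁ x₀) ^ n) := by
        rw [hew, show θ * μ * U₁ x₀ = θ * ((r₂ / r₁) ^ (1/n) * (hhat₁ * U₁ x₀)) by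
          rw [hμdef]; ring]
        rw [Real.mul_rpow hθ0 (mul_nonneg (Real.rpow_nonneg
          (le_of_lt (div_pos hr₂ hr₁)) _) (le_of_lt (mul_pos hh₁ ha)))]
        rw [Real.mul_rpow (Real.rpow_nonneg (le_of_lt (div_pos hr₂ hr₁)) _)
          (le_of_lt (mul_pos hh₁ ha)), hrpow_n]
      have hBlt : θ ^ n < 1 := Real.rpow_lt_one hθ0 hθlt hn
      have hB0 : (0:ℝ) ≤ θ ^ n := Real.rpow_nonneg hθ0 n
      have e2' : hhat₂ * D * deriv (deriv U₂) x₀ + c * (hhat₂ * deriv U₂ x₀)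
          + (hhat₂ * U₂ x₀) * (r₂ - (hhat₂ * U₂ x₀) ^ n) = 0 := by
        linear_combination hhat₂ * e2
      rw [epow] at e2'
      rw [hew] at e2'
      rw [eψ'] at e2'
      have hDle : D * (θ * μ * deriv (deriv U₁) x₀) ≤ D * (hhat₂ * deriv (deriv U₂) x₀) :=
        mul_le_mul_of_nonneg_left eψ'' (le_of_lt hD)
      have e1' : θ * μ * (D * deriv (deriv U₁) x₀ + c * deriv U₁ x₀)
          = -(θ * μ) * (U₁ x₀ * (r₁ - (hhat₁ * U₁ x₀) ^ n)) := by
        linear_combination (θ * μ) * e1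
      have hbr := aux_arith2 r₁ r₂ ((hhat₁ * U₁ x₀) ^ n) (θ ^ n) hr₁ hr hA0 hAr hB0 hBlt
      have hprod := mul_pos (mul_pos (mul_pos hθpos hμ0) ha) hbr
      linarith [e2', hDle, e1', hprod]
    · -- ψ positive in the interior: Hopf argument
      push_neg at hA
      have hmid : L₀/2 ∈ Ioo 0 L₀ := ⟨by linarith, by linarith⟩
      have hψmid : 0 < ψ (L₀/2) := hA _ hmid
      have hhalf : (0:ℝ) < L₀/2 := by linarith
      obtain ⟨γ₁, hγ₁0, hγ₁⟩ := aux_hopf D c K 0 (L₀/2) hD hK1 hhalf ψ ψ' ψ''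
        (fun x hx => hψd x ⟨hx.1, by linarith [hx.2]⟩)
        (fun x hx => hψd' x ⟨hx.1, by linarith [hx.2]⟩)
        (hψcont.mono (Icc_subset_Icc (le_refl 0) (by linarith)))
        (fun x hx => hψineq x ⟨hx.1, by linarith [hx.2]⟩)
        hψ0 hψmid
      set g : ℝ → ℝ := fun x => L₀ + L₀/2 - x with hgdef
      have hgmem : ∀ x ∈ Ioo (L₀/2) L₀, g x ∈ Ioo 0 L₀ := by
        intro x hx
        simp only [hgdef, mem_Ioo]
        constructor
        · linarith [hx.2]
        · linarith [hx.1]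
      have hgd : ∀ x : ℝ, HasDerivAt g (-1) x := by
        intro x
        simpa using (hasDerivAt_id x).const_sub (L₀ + L₀/2)
      obtain ⟨γ₂, hγ₂0, hγ₂⟩ := aux_hopf D (-c) K (L₀/2) L₀ hD hK1 (by linarith)
        (fun x => ψ (g x)) (fun x => -ψ' (g x)) (fun x => ψ'' (g x))
        (by
          intro x hx
          have h5 := (hψd (g x) (hgmem x hx)).comp x (hgd x)
          rw [mul_neg_one] at h5
          exact h5)
        (by
          intro x hx
          have h5 := ((hψd' (g x) (hgmem x hx)).neg).comp x (hgd x)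
          rw [neg_mul_neg, mul_one] at h5
          exact h5)
        (by
          apply hψcont.comp (Continuous.continuousOn (by fun_prop))
          intro x hx
          simp only [hgdef, mem_Icc] at hx ⊢
          constructor
          · linarith [hx.2]
          · linarith [hx.1])
        (by
          intro x hx
          have h5 := hψineq (g x) (hgmem x hx)
          linarith)
        (by
          show ψ (g (L₀/2)) = 0
          rw [show g (L₀/2) = L₀ by simp only [hgdef]; ring]
          exact hψL)
        (by
          show 0 < ψ (g L₀)
          rw [show g L₀ = L₀/2 by simp only [hgdef]; ring]
          exact hψmid)
      have hright : ∀ ξ ∈ Icc (L₀/2) L₀, γ₂ * (L₀ - ξ) ≤ ψ ξ := by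
        intro ξ hξ
        have hx : L₀ + L₀/2 - ξ ∈ Icc (L₀/2) L₀ := ⟨by linarith [hξ.2], by linarith [hξ.1]⟩
        have h5 := hγ₂ _ hx
        rw [show g (L₀ + L₀/2 - ξ) = ξ by simp only [hgdef]; ring] at h5
        calc γ₂ * (L₀ - ξ) = γ₂ * (L₀ + L₀/2 - ξ - L₀/2) := by ring
        _ ≤ ψ ξ := h5
      -- Lipschitz bound for U₁
      have hdiffOn : DifferentiableOn ℝ U₁ (Icc 0 L₀) := hreg₁.differentiableOn (by norm_num)
      have hcd : ContinuousOn (derivWithin U₁ (Icc 0 L₀)) (Icc 0 L₀) :=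
        hreg₁.continuousOn_derivWithin (uniqueDiffOn_Icc hL₀) (by norm_num)
      obtain ⟨C, hC⟩ := IsCompact.exists_bound_of_continuousOn isCompact_Icc hcd
      have h0mem : (0:ℝ) ∈ Icc 0 L₀ := left_mem_Icc.mpr (le_of_lt hL₀)
      have hLmem : L₀ ∈ Icc 0 L₀ := right_mem_Icc.mpr (le_of_lt hL₀)
      have hC0 : 0 ≤ C := le_trans (norm_nonneg _) (hC 0 h0mem)
      have hlipb : ∀ ξ ∈ Icc 0 L₀, U₁ ξ ≤ C * ξ ∧ U₁ ξ ≤ C * (L₀ - ξ) := by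
        intro ξ hξ
        have hl := Convex.norm_image_sub_le_of_norm_derivWithin_le hdiffOn hC
          (convex_Icc 0 L₀) h0mem hξ
        have hrr := Convex.norm_image_sub_le_of_norm_derivWithin_le hdiffOn hC
          (convex_Icc 0 L₀) hLmem hξ
        rw [hbc10, sub_zero, Real.norm_eq_abs, Real.norm_eq_abs, sub_zero,
          abs_of_nonneg hξ.1] at hl
        rw [hbc1L, sub_zero, Real.norm_eq_abs, Real.norm_eq_abs,
          abs_of_nonpos (by linarith [hξ.2] : ξ - L₀ ≤ 0)] at hrr
        constructor
        · calc U₁ ξ ≤ |U₁ ξ| := le_abs_self _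
          _ ≤ C * ξ := hl
        · calc U₁ ξ ≤ |U₁ ξ| := le_abs_self _
          _ ≤ C * -(ξ - L₀) := hrr
          _ = C * (L₀ - ξ) := by ring
      set Cv : ℝ := μ * C + 1 with hCvdef
      have hCv : 0 < Cv := by
        have : 0 ≤ μ * C := mul_nonneg (le_of_lt hμ0) hC0
        simp only [hCvdef]
        linarith
      set ε : ℝ := min (min (γ₁ / Cv) (γ₂ / Cv)) (1 - θ) with hεdef
      have hε0 : 0 < ε :=
        lt_min (lt_min (div_pos hγ₁0 hCv) (div_pos hγ₂0 hCv)) (by linarith)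
      have hε1 : ε ≤ 1 - θ := min_le_right _ _
      have hεγ₁ : ε * Cv ≤ γ₁ := by
        have h4 : ε ≤ γ₁ / Cv := le_trans (min_le_left _ _) (min_le_left _ _)
        exact (le_div_iff₀ hCv).mp h4
      have hεγ₂ : ε * Cv ≤ γ₂ := by
        have h4 : ε ≤ γ₂ / Cv := le_trans (min_le_left _ _) (min_le_right _ _)
        exact (le_div_iff₀ hCv).mp h4
      have hkey : ∀ ξ ∈ Icc 0 L₀, (θ + ε) * v ξ ≤ w ξ := by
        intro ξ hξ
        have hvle : ε * v ξ ≤ ψ ξ := by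
          rcases le_or_gt ξ (L₀/2) with hc' | hc'
          · have h1 : v ξ ≤ Cv * ξ := by
              simp only [hvdef, hCvdef]
              have ha' := mul_le_mul_of_nonneg_left (hlipb ξ hξ).1 (le_of_lt hμ0)
              have hb' : (μ * C) * ξ ≤ (μ * C + 1) * ξ :=
                mul_le_mul_of_nonneg_right (by linarith) hξ.1
              linarith
            have h2 : γ₁ * (ξ - 0) ≤ ψ ξ := hγ₁ ξ ⟨hξ.1, hc'⟩
            calc ε * v ξ ≤ ε * (Cv * ξ) := mul_le_mul_of_nonneg_left h1 (le_of_lt hε0)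
            _ = (ε * Cv) * ξ := by ring
            _ ≤ γ₁ * ξ := mul_le_mul_of_nonneg_right hεγ₁ hξ.1
            _ = γ₁ * (ξ - 0) := by ring
            _ ≤ ψ ξ := h2
          · have h1 : v ξ ≤ Cv * (L₀ - ξ) := by
              simp only [hvdef, hCvdef]
              have ha' := mul_le_mul_of_nonneg_left (hlipb ξ hξ).2 (le_of_lt hμ0)
              have hb' : (μ * C) * (L₀ - ξ) ≤ (μ * C + 1) * (L₀ - ξ) :=
                mul_le_mul_of_nonneg_right (by linarith) (by linarith [hξ.2])
              linarith
            have h2 : γ₂ * (L₀ - ξ) ≤ ψ ξ := hright ξ ⟨le_of_lt hc', hξ.2⟩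
            calc ε * v ξ ≤ ε * (Cv * (L₀ - ξ)) := mul_le_mul_of_nonneg_left h1 (le_of_lt hε0)
            _ = (ε * Cv) * (L₀ - ξ) := by ring
            _ ≤ γ₂ * (L₀ - ξ) := mul_le_mul_of_nonneg_right hεγ₂ (by linarith [hξ.2])
            _ ≤ ψ ξ := h2
        have h3 := hθle ξ hξ
        rw [hψeq ξ] at hvle
        have hexp : (θ + ε) * v ξ = θ * v ξ + ε * v ξ := by ring
        linarith
      have hin : θ + ε ∈ S := ⟨⟨by linarith, by linarith⟩, hkey⟩
      have := le_csSup hbdd hin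
      linarith
  intro ξ hξ
  have h5 := hθle ξ hξ
  rw [hθ1, one_mul] at h5
  calc ghat₂ * U₁ ξ ≤ μ * U₁ ξ := mul_le_mul_of_nonneg_right hgh (hU₁nn ξ hξ)
  _ ≤ hhat₂ * U₂ ξ := h5
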